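/- arXiv:0804.0935 — 4 statements merged into one kernel-verified Lean document; each statement's English description precedes it below -/
import Mathlib

section
/- Let p be prime, S ⊆ ℤ/pℤ with 0 ∈ S, |S| ≥ 3, S is 2-separable, and κ₂(S) ≤ |S| + m for an integer m. Then any 2-atom A of S satisfies |A| ≤ m + 3. -/
open Finset Pointwise

/-- The arithmetic progression `{a, a+d, ..., a+(L-1)d}` in `ZMod p`. -/
def apSet {p : ℕ} (a d : ZMod p) (L : ℕ) : Finset (ZMod p) :=
  (Finset.range L).image (fun i : ℕ => a + (i : ZMod p) * d)

/-- `X` is contained in an arithmetic progression of length `L` (difference nonzero). -/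
def ContainedInAP {p : ℕ} (X : Finset (ZMod p)) (L : ℕ) : Prop :=
  ∃ a d : ZMod p, d ≠ 0 ∧ X ⊆ apSet a d L

/-- `S` is `k`-separable. -/
def Separable (p k : ℕ) (S : Finset (ZMod p)) : Prop :=
  ∃ X : Finset (ZMod p), k ≤ X.card ∧ (X + S).card ≤ p - k

/-- The `k`-th isoperimetric number `κ_k(S)`. -/
noncomputable def kappa (p k : ℕ) (S : Finset (ZMod p)) : ℤ :=
  sInf {n : ℤ | ∃ X : Finset (ZMod p),
    k ≤ X.card ∧ (X + S).card ≤ p - k ∧ n = ((X + S).card : ℤ) - X.card}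

/-- `X` is a `k`-fragment of `S`. -/
noncomputable def IsFragment (p k : ℕ) (S X : Finset (ZMod p)) : Prop :=
  k ≤ X.card ∧ (X + S).card ≤ p - k ∧ ((X + S).card : ℤ) - X.card = kappa p k S

/-- `X` is a `k`-atom of `S`: a `k`-fragment of minimal cardinality. -/
noncomputable def IsKAtom (p k : ℕ) (S X : Finset (ZMod p)) : Prop :=
  IsFragment p k S X ∧ ∀ Y : Finset (ZMod p), IsFragment p k S Y → X.card ≤ Y.card

/-! ### Auxiliary lemmas -/

def kset (p : ℕ) (T : Finset (ZMod p)) : Set ℤ :=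
  {n : ℤ | ∃ X : Finset (ZMod p),
    2 ≤ X.card ∧ (X + T).card ≤ p - 2 ∧ n = ((X + T).card : ℤ) - X.card}

lemma kappa_eq_sInf (p : ℕ) (T : Finset (ZMod p)) : kappa p 2 T = sInf (kset p T) := rfl

lemma kset_lb {p : ℕ} (hp : p.Prime) {T : Finset (ZMod p)} (hT : T.Nonempty) :
    ∀ n ∈ kset p T, (T.card : ℤ) - 1 ≤ n := by
  rintro n ⟨X, hX2, hXle, rfl⟩
  have hXne : X.Nonempty := card_pos.mp (by omega)
  have hcd := ZMod.cauchy_davenport hp hXne hT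
  have hp2 := hp.two_le
  have hT1 : 1 ≤ T.card := card_pos.mpr hT
  rcases min_cases p (X.card + T.card - 1) with ⟨h1, h2⟩ | ⟨h1, h2⟩ <;> rw [h1] at hcd <;> omega

lemma kappa_le_of {p : ℕ} (hp : p.Prime) {T X : Finset (ZMod p)} (hT : T.Nonempty)
    (hX2 : 2 ≤ X.card) (hXle : (X + T).card ≤ p - 2) :
    kappa p 2 T ≤ ((X + T).card : ℤ) - X.card := by
  rw [kappa_eq_sInf]
  exact csInf_le ⟨(T.card : ℤ) - 1, fun n hn => kset_lb hp hT n hn⟩ ⟨X, hX2, hXle, rfl⟩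

lemma kappa_lb {p : ℕ} (hp : p.Prime) {T : Finset (ZMod p)} (hT : T.Nonempty)
    (hsep : Separable p 2 T) : (T.card : ℤ) - 1 ≤ kappa p 2 T := by
  obtain ⟨X, hX1, hX2⟩ := hsep
  rw [kappa_eq_sInf]
  exact le_csInf ⟨_, X, hX1, hX2, rfl⟩ (kset_lb hp hT)

lemma exists_atom {p : ℕ} (hp : p.Prime) {T : Finset (ZMod p)} (hT : T.Nonempty)
    (hsep : Separable p 2 T) : ∃ B : Finset (ZMod p), IsKAtom p 2 T B := by
  obtain ⟨X, hX2, hXle⟩ := hsep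
  have hne : (kset p T).Nonempty := ⟨_, X, hX2, hXle, rfl⟩
  have hbdd : BddBelow (kset p T) := ⟨(T.card : ℤ) - 1, fun n hn => kset_lb hp hT n hn⟩
  have hmem : kappa p 2 T ∈ kset p T := by
    rw [kappa_eq_sInf]; exact Int.csInf_mem hne hbdd
  obtain ⟨X0, h02, h0le, h0val⟩ := hmem
  have hfrag0 : IsFragment p 2 T X0 := ⟨h02, h0le, h0val.symm⟩
  have hNne : {n : ℕ | ∃ Y : Finset (ZMod p), IsFragment p 2 T Y ∧ Y.card = n}.Nonempty :=
    ⟨X0.card, X0, hfrag0, rfl⟩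
  obtain ⟨B, hBfrag, hBcard⟩ := Nat.sInf_mem hNne
  exact ⟨B, hBfrag, fun Y hY => hBcard ▸ Nat.sInf_le ⟨Y, hY, rfl⟩⟩

lemma card_le_card_add {p : ℕ} (A T : Finset (ZMod p)) (hT : T.Nonempty) :
    A.card ≤ (A + T).card := by
  obtain ⟨t, ht⟩ := hT
  have h1 : A.image (· + t) ⊆ A + T := by
    intro x hx
    rw [mem_image] at hx
    obtain ⟨a, ha, rfl⟩ := hx
    exact add_mem_add ha ht
  calc A.card = (A.image (· + t)).card :=
        (card_image_of_injective _ (add_left_injective t)).symm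
    _ ≤ _ := card_le_card h1

lemma translate_card {p : ℕ} (A : Finset (ZMod p)) (c : ZMod p) :
    (A + ({c} : Finset (ZMod p))).card = A.card := by
  have h : A + ({c} : Finset (ZMod p)) = A.image (· + c) := by
    ext x
    rw [Finset.mem_add, Finset.mem_image]
    constructor
    · rintro ⟨y, hy, z, hz, rfl⟩
      rw [Finset.mem_singleton] at hz
      exact ⟨y, hy, by rw [hz]⟩
    · rintro ⟨a, ha, rfl⟩
      exact ⟨a, ha, c, Finset.mem_singleton_self c, rfl⟩
  rw [h, card_image_of_injective _ (add_left_injective c)]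

lemma translate_ne {p : ℕ} (hp : p.Prime) {A : Finset (ZMod p)} (hne : A.Nonempty)
    (hlt : A.card < p) {c : ZMod p} (hc : c ≠ 0) : A + ({c} : Finset (ZMod p)) ≠ A := by
  haveI : Fact p.Prime := ⟨hp⟩
  intro h
  have hstep : ∀ x ∈ A, x + c ∈ A := by
    intro x hx
    have hxc : x + c ∈ A + ({c} : Finset (ZMod p)) := add_mem_add hx (mem_singleton_self c)
    rwa [h] at hxc
  obtain ⟨x, hx⟩ := hne
  have hall : ∀ n : ℕ, x + (n : ZMod p) * c ∈ A := by
    intro n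
    induction n with
    | zero => simpa using hx
    | succ k ih =>
      have h2 := hstep _ ih
      have h3 : x + ((k : ZMod p) + 1) * c = (x + (k : ZMod p) * c) + c := by ring
      rw [Nat.cast_succ, h3]
      exact h2
  have himg : (Finset.range p).image (fun n : ℕ => x + (n : ZMod p) * c) ⊆ A := by
    intro y hy
    rw [mem_image] at hy
    obtain ⟨n, _, rfl⟩ := hy
    exact hall n
  have hinj : Set.InjOn (fun n : ℕ => x + (n : ZMod p) * c) (Finset.range p) := by
    intro n1 h1 n2 h2 he
    simp only at he
    have he2 : (n1 : ZMod p) = n2 := mul_right_cancel₀ hc (add_left_cancel he)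
    have v := congrArg ZMod.val he2
    haveI : NeZero p := ⟨hp.pos.ne'⟩
    rwa [ZMod.val_cast_of_lt (mem_range.mp h1), ZMod.val_cast_of_lt (mem_range.mp h2)] at v
  have hcard := card_le_card himg
  rw [Finset.card_image_of_injOn hinj, card_range] at hcard
  omega

lemma atom_compl {p : ℕ} (hp : p.Prime) {T A : Finset (ZMod p)}
    (hT : T.Nonempty) (hA : IsKAtom p 2 T A) :
    2 * (A.card : ℤ) + kappa p 2 T ≤ p := by
  classical
  haveI : NeZero p := ⟨hp.pos.ne'⟩
  obtain ⟨⟨hA2, hADle, hAval⟩, hmin⟩ := hA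
  have hcardU : Fintype.card (ZMod p) = p := ZMod.card p
  have hp2 : 2 ≤ p := hp.two_le
  set C := -((A + T)ᶜ) with hC
  have hCcard : C.card = p - (A + T).card := by
    rw [hC, Finset.card_neg, card_compl, hcardU]
  have hC2 : 2 ≤ C.card := by omega
  have hsub : C + T ⊆ (-A)ᶜ := by
    intro y hy
    rw [Finset.mem_add] at hy
    obtain ⟨u, hu, z, hz, huz⟩ := hy
    rw [hC, Finset.mem_neg] at hu
    obtain ⟨b, hb, hbu⟩ := hu
    rw [Finset.mem_compl] at hb ⊢
    intro hyA
    rw [Finset.mem_neg] at hyA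
    obtain ⟨a, ha, hay⟩ := hyA
    apply hb
    have hba : b = a + z := by
      have : -b + z = -a := by rw [hbu, huz, hay]
      linear_combination -this
    rw [hba]
    exact add_mem_add ha hz
  have hAT : A.card ≤ (A + T).card := card_le_card_add A T hT
  have hATp : (A + T).card ≤ p := by omega
  have hCTle : (C + T).card ≤ p - A.card := by
    have h1 := card_le_card hsub
    rwa [card_compl, Finset.card_neg, hcardU] at h1
  have hCTle2 : (C + T).card ≤ p - 2 := le_trans hCTle (by omega)
  have hk1 := kappa_le_of hp hT hC2 hCTle2
  have e1 : ((C + T).card : ℤ) ≤ (p : ℤ) - A.card := by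
    have : (A.card : ℤ) ≤ p := by exact_mod_cast le_trans hAT hATp
    calc ((C + T).card : ℤ) ≤ ((p - A.card : ℕ) : ℤ) := by exact_mod_cast hCTle
      _ = (p : ℤ) - A.card := by push_cast [Nat.cast_sub (le_trans hAT hATp)]; ring
  have e2 : (C.card : ℤ) = (p : ℤ) - (A + T).card := by
    rw [hCcard]; push_cast [Nat.cast_sub hATp]; ring
  have hval : ((C + T).card : ℤ) - C.card = kappa p 2 T := by
    refine le_antisymm ?_ hk1
    rw [← hAval, e2]
    linarith
  have hfrag : IsFragment p 2 T C := ⟨hC2, hCTle2, hval⟩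
  have hle := hmin C hfrag
  have : (A.card : ℤ) ≤ C.card := by exact_mod_cast hle
  rw [e2] at this
  linarith [hAval]

lemma atom_strict {p : ℕ} (hp : p.Prime) {T A X : Finset (ZMod p)}
    (hT : T.Nonempty) (hA : IsKAtom p 2 T A) (hX : X ⊆ A) (hXne : X ≠ A) (hX2 : 2 ≤ X.card) :
    (X.card : ℤ) + kappa p 2 T + 1 ≤ ((X + T).card : ℤ) := by
  have hsub : X + T ⊆ A + T := add_subset_add_right hX
  have hle : (X + T).card ≤ p - 2 := le_trans (card_le_card hsub) hA.1.2.1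
  have h1 := kappa_le_of hp hT hX2 hle
  by_contra hcon
  push_neg at hcon
  have heq : ((X + T).card : ℤ) - X.card = kappa p 2 T := le_antisymm (by linarith) h1
  have hfrag : IsFragment p 2 T X := ⟨hX2, hle, heq⟩
  have hlt : X.card < A.card := card_lt_card (ssubset_of_subset_of_ne hX hXne)
  have := hA.2 X hfrag
  omega

lemma atom_sidon {p : ℕ} (hp : p.Prime) {T A : Finset (ZMod p)} (hT : T.Nonempty)
    (hA : IsKAtom p 2 T A) (hA3 : 3 ≤ A.card) {c : ZMod p} (hc : c ≠ 0) :
    (A ∩ (A + ({c} : Finset (ZMod p)))).card ≤ 1 := by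
  classical
  by_contra hcon
  push_neg at hcon
  have hZ2 : 2 ≤ (A ∩ (A + ({c} : Finset (ZMod p)))).card := hcon
  have hA2 : 2 ≤ A.card := hA.1.1
  have hADle : (A + T).card ≤ p - 2 := hA.1.2.1
  have hAval : ((A + T).card : ℤ) - A.card = kappa p 2 T := hA.1.2.2
  have hp2 : 2 ≤ p := hp.two_le
  set Y := A + ({c} : Finset (ZMod p)) with hY
  have hYcard : Y.card = A.card := translate_card A c
  have hYT : (Y + T).card = (A + T).card := by
    have h1 : Y + T = (A + T) + ({c} : Finset (ZMod p)) := by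
      rw [hY, add_right_comm]
    rw [h1, translate_card]
  have hAne : A.Nonempty := card_pos.mp (by omega)
  have hAcard_lt : A.card < p := by
    have h1 := card_le_card_add A T hT
    omega
  set Z := A ∩ Y with hZ
  have hZA : Z ⊆ A := inter_subset_left
  have hZne : Z ≠ A := by
    intro h
    have hAY : A ⊆ Y := inter_eq_left.mp h
    have heq : A = Y := eq_of_subset_of_card_le hAY (by rw [hYcard])
    exact translate_ne hp hAne hAcard_lt hc heq.symm
  have hstrict := atom_strict hp hT hA hZA hZne hZ2
  set W := A ∪ Y with hW
  have hWZcard : W.card + Z.card = A.card + Y.card := card_union_add_card_inter A Y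
  have hWT : W + T = (A + T) ∪ (Y + T) := union_add
  have hsubmod : (W + T).card + (Z + T).card ≤ (A + T).card + (Y + T).card := by
    have h1 : Z + T ⊆ (A + T) ∩ (Y + T) := by
      apply subset_inter
      · exact add_subset_add_right inter_subset_left
      · exact add_subset_add_right inter_subset_right
    have h2 := card_union_add_card_inter (A + T) (Y + T)
    have h3 := card_le_card h1
    have h4 : ((A + T) ∩ (Y + T)).card ≤ (A + T).card + (Y + T).card - ((A + T) ∪ (Y + T)).card := by
      omega
    rw [hWT]
    omega
  have hcompl := atom_compl hp hT hA
  have hW2 : 2 ≤ W.card := le_trans (by omega) (card_le_card subset_union_left)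
  rw [hYT] at hsubmod
  have hsubmodZ : ((W + T).card : ℤ) + ((Z + T).card : ℤ) ≤ 2 * ((A + T).card : ℤ) := by
    exact_mod_cast (by omega : (W + T).card + (Z + T).card ≤ 2 * (A + T).card)
  have hWZZ : ((W).card : ℤ) + Z.card = 2 * A.card := by
    exact_mod_cast (by omega : W.card + Z.card = 2 * A.card)
  have hATZ : ((A + T).card : ℤ) = A.card + kappa p 2 T := by linarith [hAval]
  rcases le_or_gt ((W + T).card) (p - 2) with hcase | hcase
  · have hk := kappa_le_of hp hT hW2 hcase
    linarith
  · have c3 : (p : ℤ) - 1 ≤ ((W + T).card : ℤ) := by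
      have h6 : p - 1 ≤ (W + T).card := by omega
      have h7 : ((p - 1 : ℕ) : ℤ) = (p : ℤ) - 1 := by push_cast [Nat.cast_sub (by omega : 1 ≤ p)]; ring
      calc (p : ℤ) - 1 = ((p - 1 : ℕ) : ℤ) := h7.symm
        _ ≤ _ := by exact_mod_cast h6
    have hZ2' : (2 : ℤ) ≤ (Z.card : ℤ) := by exact_mod_cast hZ2
    have hZT : ((Z.card : ℤ)) + kappa p 2 T + 1 ≤ ((Z + T).card : ℤ) := hstrict
    linarith

lemma cs_bound {p : ℕ} (A B : Finset (ZMod p)) :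
    (B.card * A.card) ^ 2 ≤
      (B + A).card * ∑ d ∈ B + A, ((B ×ˢ A).filter (fun q => q.1 + q.2 = d)).card ^ 2 := by
  classical
  have hmem : ∀ q ∈ B ×ˢ A, q.1 + q.2 ∈ B + A := fun q hq =>
    add_mem_add (mem_product.mp hq).1 (mem_product.mp hq).2
  have hsum : ∑ d ∈ B + A, ((B ×ˢ A).filter (fun q => q.1 + q.2 = d)).card
      = B.card * A.card := by
    rw [← card_product]
    exact (card_eq_sum_card_fiberwise hmem).symm
  have h := sq_sum_le_card_mul_sum_sq (s := B + A)
      (f := fun d => (((B ×ˢ A).filter (fun q => q.1 + q.2 = d)).card : ℤ))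
  have hcast : (∑ d ∈ B + A, (((B ×ˢ A).filter (fun q => q.1 + q.2 = d)).card : ℤ))
      = ((B.card * A.card : ℕ) : ℤ) := by exact_mod_cast congrArg (Nat.cast : ℕ → ℤ) hsum
  rw [hcast] at h
  exact_mod_cast h

lemma energy_le {p : ℕ} (A B : Finset (ZMod p))
    (hSid : ∀ c : ZMod p, c ≠ 0 → (A ∩ (A + ({c} : Finset (ZMod p)))).card ≤ 1) :
    (∑ d ∈ B + A, ((B ×ˢ A).filter (fun q => q.1 + q.2 = d)).card ^ 2) + B.card ≤
      B.card * A.card + B.card * B.card := by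
  classical
  set P := B ×ˢ A with hP
  set Q := (P ×ˢ P).filter (fun q => q.1.1 + q.1.2 = q.2.1 + q.2.2) with hQ
  have hQmem : ∀ q ∈ Q, (q.1.1 ∈ B ∧ q.1.2 ∈ A) ∧ (q.2.1 ∈ B ∧ q.2.2 ∈ A) ∧
      q.1.1 + q.1.2 = q.2.1 + q.2.2 := by
    intro q hq
    rw [hQ, mem_filter, hP, mem_product] at hq
    obtain ⟨⟨h1, h2⟩, h3⟩ := hq
    exact ⟨mem_product.mp h1, mem_product.mp h2, h3⟩
  have hsum : ∑ d ∈ B + A, ((B ×ˢ A).filter (fun q => q.1 + q.2 = d)).card ^ 2 = Q.card := by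
    have hmem : ∀ q ∈ Q, q.1.1 + q.1.2 ∈ B + A := by
      intro q hq
      obtain ⟨⟨h1, h2⟩, _, _⟩ := hQmem q hq
      exact add_mem_add h1 h2
    rw [card_eq_sum_card_fiberwise hmem]
    refine sum_congr rfl fun d _ => ?_
    have hfib : Q.filter (fun q => q.1.1 + q.1.2 = d) =
        (P.filter (fun q => q.1 + q.2 = d)) ×ˢ (P.filter (fun q => q.1 + q.2 = d)) := by
      ext q
      simp only [hQ, mem_filter, mem_product]
      constructor
      · rintro ⟨⟨⟨h1, h2⟩, he⟩, hd⟩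
        exact ⟨⟨h1, hd⟩, h2, he ▸ hd⟩
      · rintro ⟨⟨h1, hd1⟩, h2, hd2⟩
        exact ⟨⟨⟨h1, h2⟩, hd1.trans hd2.symm⟩, hd1⟩
    rw [hfib, card_product, sq]
  rw [hsum]
  have hsplit := card_filter_add_card_filter_not (s := Q) (p := fun q => q.1 = q.2)
  have hdiag : (Q.filter (fun q => q.1 = q.2)).card ≤ B.card * A.card := by
    rw [← card_product]
    apply card_le_card_of_injOn (fun q => q.1)
    · intro q hq
      rw [mem_coe, mem_filter] at hq
      obtain ⟨⟨h1, h2⟩, _, _⟩ := hQmem q hq.1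
      exact mem_product.mpr ⟨h1, h2⟩
    · intro q hq q' hq' he
      simp only [mem_coe, mem_filter] at hq hq'
      have he' : q.1 = q'.1 := he
      exact Prod.ext he' (by rw [← hq.2, ← hq'.2, he'])
  have hoff : (Q.filter (fun q => ¬ q.1 = q.2)).card ≤ B.card * B.card - B.card := by
    rw [← offDiag_card]
    apply card_le_card_of_injOn (fun q => (q.1.1, q.2.1))
    · intro q hq
      rw [mem_coe, mem_filter] at hq
      obtain ⟨⟨h1b, h1a⟩, ⟨h2b, h2a⟩, hsume⟩ := hQmem q hq.1
      refine mem_offDiag.mpr ⟨h1b, h2b, ?_⟩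
      intro hxx
      exact hq.2 (Prod.ext hxx (by rw [hxx] at hsume; exact add_left_cancel hsume))
    · intro q hq q' hq' he
      simp only [mem_coe, mem_filter] at hq hq'
      obtain ⟨⟨h1b, h1a⟩, ⟨h2b, h2a⟩, hsume⟩ := hQmem q hq.1
      obtain ⟨⟨h1b', h1a'⟩, ⟨h2b', h2a'⟩, hsume'⟩ := hQmem q' hq'.1
      have he' : (q.1.1, q.2.1) = (q'.1.1, q'.2.1) := he
      injection he' with hx1 hx2
      have hxne : q.1.1 ≠ q.2.1 := by
        intro hxx
        exact hq.2 (Prod.ext hxx (by rw [hxx] at hsume; exact add_left_cancel hsume))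
      have hcne : q.2.1 - q.1.1 ≠ 0 := sub_ne_zero.mpr (fun h => hxne h.symm)
      set c := q.2.1 - q.1.1 with hc
      have hm1 : q.1.2 ∈ A ∩ (A + ({c} : Finset (ZMod p))) := by
        refine mem_inter.mpr ⟨h1a, ?_⟩
        have h8 : q.1.2 = q.2.2 + c := by rw [hc]; linear_combination hsume
        rw [h8]
        exact add_mem_add h2a (mem_singleton_self c)
      have hm1' : q'.1.2 ∈ A ∩ (A + ({c} : Finset (ZMod p))) := by
        refine mem_inter.mpr ⟨h1a', ?_⟩
        have h8 : q'.1.2 = q'.2.2 + c := by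
          rw [hc, hx1, hx2]; linear_combination hsume'
        rw [h8]
        exact add_mem_add h2a' (mem_singleton_self c)
      have ha1 : q.1.2 = q'.1.2 := card_le_one.mp (hSid c hcne) _ hm1 _ hm1'
      have ha2 : q.2.2 = q'.2.2 := by
        apply add_left_cancel (a := q.2.1)
        rw [← hsume, hx1, ha1, hsume', ← hx2]
      exact Prod.ext (Prod.ext hx1 ha1) (Prod.ext hx2 ha2)
  have hbb : B.card ≤ B.card * B.card := by
    rcases Nat.eq_zero_or_pos B.card with h | h
    · omega
    · exact Nat.le_mul_of_pos_left _ h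
  omega

theorem two_atom_card_le (p : ℕ) (hp : p.Prime) (S : Finset (ZMod p)) (h0 : (0 : ZMod p) ∈ S)
    (hS3 : 3 ≤ S.card) (hsep : Separable p 2 S) (m : ℤ)
    (hkappa : kappa p 2 S ≤ (S.card : ℤ) + m)
    (A : Finset (ZMod p)) (hA : IsKAtom p 2 S A) :
    (A.card : ℤ) ≤ m + 3 := by
  classical
  by_contra hcon
  push_neg at hcon
  have hSne : S.Nonempty := card_pos.mp (by omega)
  have hA2 : 2 ≤ A.card := hA.1.1
  have hADle : (A + S).card ≤ p - 2 := hA.1.2.1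
  have hAval : ((A + S).card : ℤ) - A.card = kappa p 2 S := hA.1.2.2
  have hκlb : (S.card : ℤ) - 1 ≤ kappa p 2 S := kappa_lb hp hSne hsep
  have hm1 : (-1 : ℤ) ≤ m := by linarith
  have hx4 : m + 4 ≤ (A.card : ℤ) := by linarith
  have ha3 : 3 ≤ A.card := by exact_mod_cast (by linarith : (3 : ℤ) ≤ (A.card : ℤ))
  have hκub : kappa p 2 S ≤ (S.card : ℤ) + (A.card : ℤ) - 4 := by linarith
  have hAne : A.Nonempty := card_pos.mp (by omega)
  have hsidonA : ∀ c : ZMod p, c ≠ 0 → (A ∩ (A + ({c} : Finset (ZMod p)))).card ≤ 1 :=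
    fun c hc => atom_sidon hp hSne hA ha3 hc
  have hsepA : Separable p 2 A := ⟨S, by omega, by rw [add_comm]; exact hADle⟩
  have hκA : kappa p 2 A ≤ (A.card : ℤ) + kappa p 2 S - S.card := by
    have h1 := kappa_le_of hp hAne (X := S) (by omega) (by rw [add_comm]; exact hADle)
    have h2 : ((S + A).card : ℤ) = (A.card : ℤ) + kappa p 2 S := by
      rw [add_comm S A]; linarith
    linarith
  obtain ⟨B, hB⟩ := exists_atom hp hAne hsepA
  have hb2 : 2 ≤ B.card := hB.1.1
  have hBval : ((B + A).card : ℤ) - B.card = kappa p 2 A := hB.1.2.2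
  have hN : ((B + A).card : ℤ) ≤ (B.card : ℤ) + 2 * A.card - 4 := by linarith
  set x : ℤ := (A.card : ℤ) with hxdef
  set y : ℤ := (B.card : ℤ) with hydef
  have hx3 : (3 : ℤ) ≤ x := by rw [hxdef]; exact_mod_cast ha3
  have hy2 : (2 : ℤ) ≤ y := by rw [hydef]; exact_mod_cast hb2
  rcases le_or_gt B.card A.card with hba | hab
  · -- case |B| ≤ |A|
    have hyx : y ≤ x := by rw [hxdef, hydef]; exact_mod_cast hba
    have hcs := cs_bound A B
    have hen := energy_le A B hsidonA
    set E : ℕ := ∑ d ∈ B + A, ((B ×ˢ A).filter (fun q => q.1 + q.2 = d)).card ^ 2 with hE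
    have hcsZ : (y * x) ^ 2 ≤ ((B + A).card : ℤ) * (E : ℤ) := by
      rw [hxdef, hydef]; exact_mod_cast hcs
    have henZ : (E : ℤ) + y ≤ y * x + y * y := by
      rw [hxdef, hydef]; exact_mod_cast hen
    have he0 : (0 : ℤ) ≤ (E : ℤ) := Int.natCast_nonneg E
    have hstep : (y * x) ^ 2 ≤ (y + 2 * x - 4) * (x * y + y * y - y) := by
      calc (y * x) ^ 2 ≤ ((B + A).card : ℤ) * (E : ℤ) := hcsZ
        _ ≤ (y + 2 * x - 4) * (E : ℤ) := by
            apply mul_le_mul_of_nonneg_right _ he0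
            linarith
        _ ≤ (y + 2 * x - 4) * (x * y + y * y - y) := by
            apply mul_le_mul_of_nonneg_left _ (by linarith)
            linarith
    have key : x ^ 2 * y ≤ (y + 2 * x - 4) * (x + y - 1) := by
      have h3 : (x ^ 2 * y) * y ≤ ((y + 2 * x - 4) * (x + y - 1)) * y := by
        calc (x ^ 2 * y) * y = (y * x) ^ 2 := by ring
          _ ≤ (y + 2 * x - 4) * (x * y + y * y - y) := hstep
          _ = ((y + 2 * x - 4) * (x + y - 1)) * y := by ring
      exact le_of_mul_le_mul_right h3 (by linarith)
    have P4 : (0 : ℤ) ≤ (x - 2) * ((y + 2 * x - 4) * (x + y - 1) - x ^ 2 * y) :=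
      mul_nonneg (by linarith) (by linarith)
    have P5 : (0 : ℤ) ≤ (y - 2) * ((x - 1) * (x - 2) * (x - 3)) :=
      mul_nonneg (by linarith)
        (mul_nonneg (mul_nonneg (by linarith) (by linarith)) (by linarith))
    have P6 : (0 : ℤ) ≤ (x - 2) * (y - 2) * (x - y) :=
      mul_nonneg (mul_nonneg (by linarith) (by linarith)) (by linarith)
    linarith [P4, P5, P6]
  · -- case |A| < |B|
    have hxy : x ≤ y := by
      have h10 : A.card ≤ B.card := le_of_lt hab
      rw [hxdef, hydef]; exact_mod_cast h10
    have hb3 : 3 ≤ B.card := by omega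
    have hsidonB : ∀ c : ZMod p, c ≠ 0 → (B ∩ (B + ({c} : Finset (ZMod p)))).card ≤ 1 :=
      fun c hc => atom_sidon hp hAne hB hb3 hc
    have hcs := cs_bound B A
    have hen := energy_le B A hsidonB
    set E : ℕ := ∑ d ∈ A + B, ((A ×ˢ B).filter (fun q => q.1 + q.2 = d)).card ^ 2 with hE
    have hAB : ((A + B).card : ℤ) = ((B + A).card : ℤ) := by rw [add_comm A B]
    have hcsZ : (x * y) ^ 2 ≤ ((B + A).card : ℤ) * (E : ℤ) := by
      rw [← hAB, hxdef, hydef]; exact_mod_cast hcs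
    have henZ : (E : ℤ) + x ≤ x * y + x * x := by
      rw [hxdef, hydef]; exact_mod_cast hen
    have he0 : (0 : ℤ) ≤ (E : ℤ) := Int.natCast_nonneg E
    have hstep : (x * y) ^ 2 ≤ (y + 2 * x - 4) * (x * y + x * x - x) := by
      calc (x * y) ^ 2 ≤ ((B + A).card : ℤ) * (E : ℤ) := hcsZ
        _ ≤ (y + 2 * x - 4) * (E : ℤ) := by
            apply mul_le_mul_of_nonneg_right _ he0
            linarith
        _ ≤ (y + 2 * x - 4) * (x * y + x * x - x) := by
            apply mul_le_mul_of_nonneg_left _ (by linarith)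
            linarith
    have key : x * y ^ 2 ≤ (y + 2 * x - 4) * (x + y - 1) := by
      have h3 : (x * y ^ 2) * x ≤ ((y + 2 * x - 4) * (x + y - 1)) * x := by
        calc (x * y ^ 2) * x = (x * y) ^ 2 := by ring
          _ ≤ (y + 2 * x - 4) * (x * y + x * x - x) := hstep
          _ = ((y + 2 * x - 4) * (x + y - 1)) * x := by ring
      exact le_of_mul_le_mul_right h3 (by linarith)
    have P4 : (0 : ℤ) ≤ (y + 2 * x - 4) * (x + y - 1) - x * y ^ 2 := by linarith
    have P5 : (0 : ℤ) ≤ (x - 1) * (x - 2) * (x - 3) :=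
      mul_nonneg (mul_nonneg (by linarith) (by linarith)) (by linarith)
    have P6 : (0 : ℤ) ≤ (y - x) * ((x - 1) * (x + y) - 3 * x + 5) := by
      apply mul_nonneg (by linarith)
      have h9 : 2 * (x + y) ≤ (x - 1) * (x + y) :=
        mul_le_mul_of_nonneg_right (by linarith) (by linarith)
      linarith
    linarith [P4, P5, P6]
end

section
/- Let p be prime, k ≥ 3, and let S ⊆ ℤ/pℤ be k-separable with 0 ∈ S, |S| ≥ 2, and κ_k(S) ≤ |S| + m. Then every k-atom A of S satisfies |A| ≤ 2m + k + 2. -/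
open Finset Pointwise

/-- `ℓ(X)`: the length of a shortest arithmetic progression containing `X`. -/
noncomputable def APlen {p : ℕ} (X : Finset (ZMod p)) : ℕ :=
  sInf {L : ℕ | ContainedInAP X L}

section Aux

set_option linter.unusedSectionVars false
set_option maxHeartbeats 1000000

variable {p : ℕ} [NeZero p]

lemma card_le_p (hp : p.Prime) (X : Finset (ZMod p)) : X.card ≤ p := by
  simpa [ZMod.card p] using Finset.card_le_univ X

lemma kappa_bddBelow (j : ℕ) (T : Finset (ZMod p)) (hp : p.Prime) :
    BddBelow {n : ℤ | ∃ X : Finset (ZMod p),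
      j ≤ X.card ∧ (X + T).card ≤ p - j ∧ n = ((X + T).card : ℤ) - X.card} := by
  refine ⟨-(p : ℤ), fun n hn => ?_⟩
  obtain ⟨X, _, _, rfl⟩ := hn
  have h1 : (X.card : ℤ) ≤ p := by exact_mod_cast card_le_p hp X
  have h2 : (0 : ℤ) ≤ ((X + T).card : ℤ) := by positivity
  linarith

lemma kappa_le (hp : p.Prime) {j : ℕ} {T X : Finset (ZMod p)}
    (h1 : j ≤ X.card) (h2 : (X + T).card ≤ p - j) :
    kappa p j T ≤ ((X + T).card : ℤ) - X.card :=
  csInf_le (kappa_bddBelow j T hp) ⟨X, h1, h2, rfl⟩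

lemma atom_exists (hp : p.Prime) {j : ℕ} {T : Finset (ZMod p)}
    (hsep : Separable p j T) : ∃ X, IsKAtom p j T X := by
  obtain ⟨X0, h1, h2⟩ := hsep
  have hne : {n : ℤ | ∃ X : Finset (ZMod p),
      j ≤ X.card ∧ (X + T).card ≤ p - j ∧ n = ((X + T).card : ℤ) - X.card}.Nonempty :=
    ⟨_, X0, h1, h2, rfl⟩
  have hmem := Int.csInf_mem hne (kappa_bddBelow j T hp)
  obtain ⟨X1, k1, k2, k3⟩ := hmem
  have hfrag : IsFragment p j T X1 := ⟨k1, k2, k3.symm⟩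
  have hcs : {n : ℕ | ∃ Y, IsFragment p j T Y ∧ Y.card = n}.Nonempty := ⟨X1.card, X1, hfrag, rfl⟩
  obtain ⟨Y, hY, hYc⟩ := Nat.sInf_mem hcs
  exact ⟨Y, hY, fun Z hZ => hYc ▸ Nat.sInf_le ⟨Z, hZ, rfl⟩⟩

lemma frag_translate {j : ℕ} {T X : Finset (ZMod p)} (c : ZMod p)
    (hX : IsFragment p j T X) : IsFragment p j T ({c} + X) := by
  have he : ({c} + X) + T = {c} + (X + T) := add_assoc _ _ _
  refine ⟨?_, ?_, ?_⟩
  · rw [Finset.card_singleton_add]; exact hX.1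
  · rw [he, Finset.card_singleton_add]; exact hX.2.1
  · rw [he, Finset.card_singleton_add, Finset.card_singleton_add]; exact hX.2.2

lemma dual_frag (hp : p.Prime) {j : ℕ} {T X : Finset (ZMod p)}
    (hX : IsFragment p j T X) :
    IsFragment p j T (-((Finset.univ : Finset (ZMod p)) \ (X + T))) ∧
      (-((Finset.univ : Finset (ZMod p)) \ (X + T))).card = p - (X + T).card := by
  set Y : Finset (ZMod p) := -((Finset.univ : Finset (ZMod p)) \ (X + T)) with hYdef
  have hcardY : Y.card = p - (X + T).card := by
    rw [hYdef, Finset.card_neg, Finset.card_sdiff_of_subset (Finset.subset_univ _), Finset.card_univ,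
      ZMod.card p]
  have hjp : j ≤ p := le_trans hX.1 (card_le_p hp X)
  have hXp : X.card ≤ p := card_le_p hp X
  have hXTp : (X + T).card ≤ p := card_le_p hp _
  have hXTc : (X + T).card ≤ p - j := hX.2.1
  have hXj : j ≤ X.card := hX.1
  have hsub : Y + T ⊆ (Finset.univ : Finset (ZMod p)) \ (-X) := by
    intro x hx
    rw [Finset.mem_add] at hx
    obtain ⟨y, hy, t, ht, rfl⟩ := hx
    rw [hYdef, Finset.mem_neg] at hy
    obtain ⟨z, hz, rfl⟩ := hy
    rw [Finset.mem_sdiff] at hz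
    rw [Finset.mem_sdiff]
    refine ⟨Finset.mem_univ _, fun hmem => ?_⟩
    rw [Finset.mem_neg] at hmem
    obtain ⟨w, hw, hwx⟩ := hmem
    apply hz.2
    rw [Finset.mem_add]
    exact ⟨w, hw, t, ht, by linear_combination -hwx⟩
  have hYT : (Y + T).card ≤ p - X.card := by
    calc (Y + T).card ≤ ((Finset.univ : Finset (ZMod p)) \ (-X)).card := Finset.card_le_card hsub
    _ = p - X.card := by
        rw [Finset.card_sdiff_of_subset (Finset.subset_univ _), Finset.card_univ, ZMod.card p,
          Finset.card_neg]
  have h1 : j ≤ Y.card := by omega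
  have h2 : (Y + T).card ≤ p - j := by omega
  refine ⟨⟨h1, h2, ?_⟩, hcardY⟩
  have hle : kappa p j T ≤ ((Y + T).card : ℤ) - Y.card := kappa_le hp h1 h2
  have hc1 : ((Y + T).card : ℤ) ≤ (p : ℤ) - X.card := by omega
  have hc2 : (Y.card : ℤ) = (p : ℤ) - (X + T).card := by omega
  have hval := hX.2.2
  have hge : ((Y + T).card : ℤ) - Y.card ≤ kappa p j T := by
    rw [hc2]; linarith
  exact le_antisymm hge hle

lemma atom_two_mul_le (hp : p.Prime) {j : ℕ} {T A : Finset (ZMod p)}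
    (hA : IsKAtom p j T A) : 2 * (A.card : ℤ) ≤ (p : ℤ) - kappa p j T := by
  obtain ⟨hfrag, hcard⟩ := dual_frag hp hA.1
  have hmin := hA.2 _ hfrag
  have hATp : (A + T).card ≤ p := card_le_p hp _
  have hval := hA.1.2.2
  have h1 : (A.card : ℤ) ≤ (p : ℤ) - (A + T).card := by
    rw [hcard] at hmin; omega
  linarith

lemma translate_eq_self (hp : p.Prime) {c : ZMod p} (hc : c ≠ 0)
    {A : Finset (ZMod p)} (hne : A.Nonempty) (h : {c} + A = A) :
    A = (Finset.univ : Finset (ZMod p)) := by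
  haveI : Fact p.Prime := ⟨hp⟩
  obtain ⟨a, ha⟩ := hne
  have key : ∀ n : ℕ, a + (n : ZMod p) * c ∈ A := by
    intro n
    induction n with
    | zero => simpa using ha
    | succ n ih =>
      have hmem : c + (a + (n : ZMod p) * c) ∈ {c} + A := by
        rw [Finset.mem_add]
        exact ⟨c, Finset.mem_singleton_self c, _, ih, rfl⟩
      rw [h] at hmem
      have heq : a + ((n + 1 : ℕ) : ZMod p) * c = c + (a + (n : ZMod p) * c) := by
        push_cast; ring
      rw [heq]
      exact hmem
  apply Finset.eq_univ_of_forall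
  intro x
  have hval : (((((x - a) * c⁻¹).val : ℕ)) : ZMod p) = (x - a) * c⁻¹ := by
    simp [ZMod.natCast_val, ZMod.cast_id]
  have hmem := key ((x - a) * c⁻¹).val
  rw [hval] at hmem
  have he : a + (x - a) * c⁻¹ * c = x := by field_simp; ring
  rwa [he] at hmem

lemma atom_inter_translate (hp : p.Prime) {j : ℕ} (hj : 1 ≤ j)
    {T A : Finset (ZMod p)} (hT : T.Nonempty) (hA : IsKAtom p j T A)
    {c : ZMod p} (hc : c ≠ 0) : (A ∩ ({c} + A)).card < j := by
  by_contra hcon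
  push_neg at hcon
  set F : Finset (ZMod p) := {c} + A with hFdef
  have hF : IsFragment p j T F := frag_translate c hA.1
  have hFcard : F.card = A.card := Finset.card_singleton_add _ _
  have hAne : A.Nonempty := Finset.card_pos.mp (lt_of_lt_of_le hj hA.1.1)
  have hp0 : 0 < p := hp.pos
  have hANF : A ≠ F := by
    intro he
    have huniv : A = Finset.univ := translate_eq_self hp hc hAne he.symm
    have h1 : A.card ≤ (A + T).card := Finset.card_le_card_add_right hT
    have h2 : A.card = p := by rw [huniv, Finset.card_univ, ZMod.card p]
    have h3 : (A + T).card ≤ p - j := hA.1.2.1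
    omega
  have hsubmod : ((A ∩ F) + T).card + ((A ∪ F) + T).card ≤ (A + T).card + (F + T).card := by
    have hs1 : (A ∩ F) + T ⊆ (A + T) ∩ (F + T) := by
      intro x hx
      rw [Finset.mem_add] at hx
      obtain ⟨y, hy, t, ht, rfl⟩ := hx
      rw [Finset.mem_inter] at hy
      rw [Finset.mem_inter, Finset.mem_add, Finset.mem_add]
      exact ⟨⟨y, hy.1, t, ht, rfl⟩, ⟨y, hy.2, t, ht, rfl⟩⟩
    have hs2 : (A ∪ F) + T = (A + T) ∪ (F + T) := Finset.union_add
    calc ((A ∩ F) + T).card + ((A ∪ F) + T).card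
        ≤ ((A + T) ∩ (F + T)).card + ((A + T) ∪ (F + T)).card := by
          rw [hs2]; exact Nat.add_le_add_right (Finset.card_le_card hs1) _
      _ = (A + T).card + (F + T).card := by
          rw [add_comm]; exact Finset.card_union_add_card_inter _ _
  have hITle : ((A ∩ F) + T).card ≤ p - j :=
    le_trans (Finset.card_le_card (Finset.add_subset_add_right Finset.inter_subset_left)) hA.1.2.1
  have hI : kappa p j T ≤ (((A ∩ F) + T).card : ℤ) - (A ∩ F).card := kappa_le hp hcon hITle
  have hAval : ((A + T).card : ℤ) - A.card = kappa p j T := hA.1.2.2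
  have hFval : ((F + T).card : ℤ) - F.card = kappa p j T := hF.2.2
  have hcards : (A ∩ F).card + (A ∪ F).card = A.card + F.card :=
    Finset.card_inter_add_card_union _ _
  have hjle : j ≤ (A ∪ F).card := le_trans hA.1.1 (Finset.card_le_card Finset.subset_union_left)
  have hsub' : (((A ∩ F) + T).card : ℤ) + ((A ∪ F) + T).card
      ≤ ((A + T).card : ℤ) + (F + T).card := by exact_mod_cast hsubmod
  have hcards' : ((A ∩ F).card : ℤ) + (A ∪ F).card = (A.card : ℤ) + F.card := by
    exact_mod_cast hcards
  have hcon' : (j : ℤ) ≤ ((A ∩ F).card : ℤ) := by exact_mod_cast hcon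
  have hFc' : (F.card : ℤ) = (A.card : ℤ) := by exact_mod_cast hFcard
  by_cases hU : ((A ∪ F) + T).card ≤ p - j
  · have hUk : kappa p j T ≤ (((A ∪ F) + T).card : ℤ) - (A ∪ F).card := kappa_le hp hjle hU
    have hIeq : (((A ∩ F) + T).card : ℤ) - (A ∩ F).card = kappa p j T := by linarith
    have hfragI : IsFragment p j T (A ∩ F) := ⟨hcon, hITle, hIeq⟩
    have hmin := hA.2 _ hfragI
    have hAI : A ∩ F = A := Finset.eq_of_subset_of_card_le Finset.inter_subset_left hmin
    have hAsubF : A ⊆ F := Finset.inter_eq_left.mp hAI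
    exact hANF (Finset.eq_of_subset_of_card_le hAsubF (le_of_eq hFcard))
  · push_neg at hU
    have h2A := atom_two_mul_le hp hA
    have hjp : j ≤ p := le_trans hA.1.1 (card_le_p hp A)
    have hU' : ((p : ℤ) - j) + 1 ≤ (((A ∪ F) + T).card : ℤ) := by omega
    linarith

lemma translate_inter_translate (hp : p.Prime) {j : ℕ} (hj : 1 ≤ j)
    {T A : Finset (ZMod p)} (hT : T.Nonempty) (hA : IsKAtom p j T A)
    {c1 c2 : ZMod p} (hne : c1 ≠ c2) :
    (({c1} + A) ∩ ({c2} + A)).card < j := by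
  have heq : ({c1} + A) ∩ ({c2} + A) = {c1} + (A ∩ ({c2 - c1} + A)) := by
    rw [Finset.singleton_add_inter]
    congr 1
    rw [← add_assoc, Finset.singleton_add_singleton]
    congr 1
    rw [add_sub_cancel]
  rw [heq, Finset.card_singleton_add]
  exact atom_inter_translate hp hj hT hA (sub_ne_zero.mpr (Ne.symm hne))

lemma union_translates_card (hp : p.Prime) {T B : Finset (ZMod p)}
    (hT : T.Nonempty) (hB : IsKAtom p 2 T B) (D : Finset (ZMod p)) :
    2 * ((D.card : ℤ) * B.card) - D.card * (D.card - 1) ≤ 2 * ((D + B).card : ℤ) := by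
  induction D using Finset.induction_on with
  | empty => simp
  | @insert c D hc ih =>
    have hins : (insert c D) + B = ({c} + B) ∪ (D + B) := by
      rw [Finset.insert_eq, Finset.union_add]
    have hIle : (({c} + B) ∩ (D + B)).card ≤ D.card := by
      have hsubset : ({c} + B) ∩ (D + B) ⊆ D.biUnion (fun d => ({c} + B) ∩ ({d} + B)) := by
        intro x hx
        rw [Finset.mem_inter] at hx
        obtain ⟨hx1, hx2⟩ := hx
        rw [Finset.mem_add] at hx2
        obtain ⟨d, hd, b, hb, rfl⟩ := hx2
        rw [Finset.mem_biUnion]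
        refine ⟨d, hd, Finset.mem_inter.mpr ⟨hx1, ?_⟩⟩
        rw [Finset.mem_add]
        exact ⟨d, Finset.mem_singleton_self d, b, hb, rfl⟩
      have step1 : (({c} + B) ∩ (D + B)).card ≤ ∑ d ∈ D, (({c} + B) ∩ ({d} + B)).card :=
        le_trans (Finset.card_le_card hsubset) Finset.card_biUnion_le
      have step2 : ∑ d ∈ D, (({c} + B) ∩ ({d} + B)).card ≤ ∑ _d ∈ D, 1 := by
        refine Finset.sum_le_sum fun d hd => ?_
        have hcd : c ≠ d := fun h => hc (h ▸ hd)
        have := translate_inter_translate hp (by norm_num) hT hB hcd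
        omega
      have step3 : ∑ _d ∈ D, 1 = D.card := by simp
      omega
    have hcardU : (({c} + B) ∪ (D + B)).card + (({c} + B) ∩ (D + B)).card
        = B.card + (D + B).card := by
      rw [Finset.card_union_add_card_inter, Finset.card_singleton_add]
    have hcardins : (insert c D).card = D.card + 1 := Finset.card_insert_of_notMem hc
    rw [hins, hcardins]
    have hIle' : ((({c} + B) ∩ (D + B)).card : ℤ) ≤ (D.card : ℤ) := by exact_mod_cast hIle
    have hcardU' : ((({c} + B) ∪ (D + B)).card : ℤ) + (({c} + B) ∩ (D + B)).card
        = (B.card : ℤ) + ((D + B).card : ℤ) := by exact_mod_cast hcardU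
    push_cast
    nlinarith [ih]

end Aux

set_option maxHeartbeats 1000000 in
theorem k_atom_card_le (p : ℕ) (hp : p.Prime) (k : ℕ) (hk : 3 ≤ k)
    (S : Finset (ZMod p)) (h0 : (0 : ZMod p) ∈ S) (hS2 : 2 ≤ S.card)
    (hsep : Separable p k S) (m : ℤ) (hkappa : kappa p k S ≤ (S.card : ℤ) + m)
    (A : Finset (ZMod p)) (hA : IsKAtom p k S A) :
    (A.card : ℤ) ≤ 2 * m + k + 2 := by
  haveI : NeZero p := ⟨hp.pos.ne'⟩
  have hSne : S.Nonempty := ⟨0, h0⟩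
  have hAk : k ≤ A.card := hA.1.1
  have hA2 : 2 ≤ A.card := le_trans (by omega) hAk
  have hAne : A.Nonempty := Finset.card_pos.mp (by omega)
  have hAval : ((A + S).card : ℤ) - A.card = kappa p k S := hA.1.2.2
  have hASle : (A + S).card ≤ p - k := hA.1.2.1
  -- A is 2-separable via S
  have hSA : S + A = A + S := add_comm S A
  have hsepA : Separable p 2 A := ⟨S, hS2, by rw [hSA]; omega⟩
  -- κ₂(A) ≤ |A| + m
  have hk2A_le : kappa p 2 A ≤ (A.card : ℤ) + m := by
    have h := kappa_le hp (T := A) (X := S) hS2 (by rw [hSA]; omega)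
    rw [hSA] at h
    linarith
  -- B : 2-atom of A
  obtain ⟨B, hB⟩ := atom_exists hp hsepA
  have hBt : 2 ≤ B.card := hB.1.1
  have hBne : B.Nonempty := Finset.card_pos.mp (by omega)
  have hBval : ((B + A).card : ℤ) - B.card = kappa p 2 A := hB.1.2.2
  have hBAle : (B + A).card ≤ p - 2 := hB.1.2.1
  have hp2 : 2 ≤ p := le_trans hBt (card_le_p hp B)
  -- κ₂(A) ≥ |A| - 1 : Cauchy-Davenport
  have hCD : (A.card : ℤ) - 1 ≤ kappa p 2 A := by
    have hcd := ZMod.cauchy_davenport hp hBne hAne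
    rcases min_le_iff.mp hcd with h | h
    · exfalso
      have : B.card ≤ (B + A).card := Finset.card_le_card_add_right hAne
      omega
    · have h' : (B.card : ℤ) + A.card - 1 ≤ ((B + A).card : ℤ) := by omega
      linarith
  -- B is 2-separable via A, and κ₂(B) ≤ |B| + κ₂(A) - |A|
  have hAB : A + B = B + A := add_comm A B
  have hsepB : Separable p 2 B := ⟨A, hA2, by rw [hAB]; exact hBAle⟩
  have hk2B_le : kappa p 2 B ≤ (B.card : ℤ) + kappa p 2 A - A.card := by
    have h := kappa_le hp (T := B) (X := A) hA2 (by rw [hAB]; exact hBAle)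
    rw [hAB] at h
    linarith
  -- C : 2-atom of B
  obtain ⟨C, hC⟩ := atom_exists hp hsepB
  have hCu : 2 ≤ C.card := hC.1.1
  have hCval : ((C + B).card : ℤ) - C.card = kappa p 2 B := hC.1.2.2
  have hCBle : (C + B).card ≤ p - 2 := hC.1.2.1
  -- two distinct elements of C and of B
  obtain ⟨c1, hc1, c2, hc2, hc12⟩ := Finset.one_lt_card.mp (by omega : 1 < C.card)
  obtain ⟨b1, hb1, b2, hb2, hb12⟩ := Finset.one_lt_card.mp (by omega : 1 < B.card)
  -- (i) 2|B| - 1 ≤ |C+B|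
  have hi : 2 * (B.card : ℤ) - 1 ≤ ((C + B).card : ℤ) := by
    have hsub1 : ({c1} + B) ∪ ({c2} + B) ⊆ C + B := by
      apply Finset.union_subset <;>
        exact Finset.add_subset_add_right (Finset.singleton_subset_iff.mpr (by assumption))
    have hint : (({c1} + B) ∩ ({c2} + B)).card < 2 :=
      translate_inter_translate hp (by norm_num) hAne hB hc12
    have hsum := Finset.card_union_add_card_inter ({c1} + B) ({c2} + B)
    rw [Finset.card_singleton_add, Finset.card_singleton_add] at hsum
    have hle := Finset.card_le_card hsub1
    omega
  -- (ii) 2|C| - 1 ≤ |B+C| = |C+B|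
  have hii : 2 * (C.card : ℤ) - 1 ≤ ((C + B).card : ℤ) := by
    have hsub1 : ({b1} + C) ∪ ({b2} + C) ⊆ B + C := by
      apply Finset.union_subset <;>
        exact Finset.add_subset_add_right (Finset.singleton_subset_iff.mpr (by assumption))
    have hint : (({b1} + C) ∩ ({b2} + C)).card < 2 :=
      translate_inter_translate hp (by norm_num) hBne hC hb12
    have hsum := Finset.card_union_add_card_inter ({b1} + C) ({b2} + C)
    rw [Finset.card_singleton_add, Finset.card_singleton_add] at hsum
    have hle := Finset.card_le_card hsub1
    have hBC : B + C = C + B := add_comm B C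
    rw [hBC] at hle
    omega
  -- (iii) full union bound
  have hiii := union_translates_card hp hAne hB C
  -- t ≤ μ + 3 where μ = κ₂(A) - |A|, t = |B|, u = |C|
  have hμ1 : (-1 : ℤ) ≤ kappa p 2 A - A.card := by linarith
  have hmain : ∀ t u μ κB : ℤ, 2 ≤ t → 2 ≤ u → -1 ≤ μ → μ + 3 < t → κB ≤ t + μ →
      2 * t - 1 ≤ u + κB → 2 * u - 1 ≤ u + κB → 2 * (u * t) - u * (u - 1) ≤ 2 * (u + κB) →
      False := by
    intro t u μ κB ht2 hu2 hm1 hcon hκB hA1 hA2 hA3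
    have h1 : t - μ - 1 ≤ u := by linarith
    have h2 : u ≤ t + μ + 1 := by linarith
    have h4 : 2 * (u * t) - u * (u - 1) ≤ 2 * u + 2 * t + 2 * μ := by linarith
    have hprod : (0 : ℤ) ≤ (u - (t - μ - 1)) * (t + μ + 1 - u) := by
      apply mul_nonneg <;> linarith
    nlinarith [mul_nonneg (by linarith : (0:ℤ) ≤ t - μ - 4) (by linarith : (0:ℤ) ≤ μ + 1),
      sq_nonneg (t - μ - 4)]
  have htμ : (B.card : ℤ) ≤ (kappa p 2 A - A.card) + 3 := by
    by_contra hcon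
    push_neg at hcon
    have ht2 : (2 : ℤ) ≤ (B.card : ℤ) := by exact_mod_cast hBt
    have hu2 : (2 : ℤ) ≤ (C.card : ℤ) := by exact_mod_cast hCu
    exact hmain (B.card : ℤ) (C.card : ℤ) (kappa p 2 A - A.card) (kappa p 2 B)
      ht2 hu2 hμ1 hcon (by linarith) (by linarith) (by linarith) (by linarith)
  -- final: 2|A| - (k-1) ≤ |B+A| = |B| + κ₂(A)
  have hfinal : 2 * (A.card : ℤ) - ((k : ℤ) - 1) ≤ ((B + A).card : ℤ) := by
    have hsub1 : ({b1} + A) ∪ ({b2} + A) ⊆ B + A := by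
      apply Finset.union_subset <;>
        exact Finset.add_subset_add_right (Finset.singleton_subset_iff.mpr (by assumption))
    have hint : (({b1} + A) ∩ ({b2} + A)).card < k :=
      translate_inter_translate hp (by omega) hSne hA hb12
    have hsum := Finset.card_union_add_card_inter ({b1} + A) ({b2} + A)
    rw [Finset.card_singleton_add, Finset.card_singleton_add] at hsum
    have hle := Finset.card_le_card hsub1
    omega
  linarith
end

section
/- Let p be prime, and let S ⊆ ℤ/pℤ with 0 ∈ S satisfy |2S| ≤ 2|S| + m where 6 ≤ m ≤ ε|S| with ε ≤ 10⁻⁴, and suppose |2S| + m + 3 ≤ p. Let A be an (m+3)-atom of S with 0 ∈ A (so |S+A| ≤ |S| + |A| + m and |A| ≤ 3m+5). Then for any positive integer k ≤ 32, |kA| ≤ k(|A| + m)(1 + 5kε/2) + 1. -/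
open Finset Pointwise

/-- `iterSum A k = A + A + ⋯ + A` (`k` times), with `iterSum A 0 = {0}`. -/
def iterSum {p : ℕ} (A : Finset (ZMod p)) : ℕ → Finset (ZMod p)
  | 0 => {0}
  | (n + 1) => iterSum A n + A

/-- Petridis-style consequence of the Plünnecke–Ruzsa machinery: there is a nonempty
subset `C ⊆ S` with `|C + nA| ≤ (|S+A|/|S|)^n |C|` for all `n`. -/
lemma petridis_aux {G : Type*} [AddCommGroup G] [DecidableEq G]
    (S A : Finset G) (hS : S.Nonempty) :
    ∃ C : Finset G, C ⊆ S ∧ C.Nonempty ∧ ∀ n : ℕ,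
      (C + n • A).card * S.card ^ n ≤ (S + A).card ^ n * C.card := by
  have hS' : S ∈ S.powerset.erase ∅ :=
    mem_erase_of_ne_of_mem hS.ne_empty (mem_powerset_self _)
  obtain ⟨C, hC, hCmin⟩ := exists_min_image (S.powerset.erase ∅)
      (fun C => ((C + A).card : ℚ≥0) / C.card) ⟨S, hS'⟩
  rw [mem_erase, mem_powerset, ← nonempty_iff_ne_empty] at hC
  obtain ⟨hCne, hCS⟩ := hC
  have hC0 : (0 : ℚ≥0) < C.card := by exact_mod_cast hCne.card_pos
  have hS0 : (0 : ℚ≥0) < S.card := by exact_mod_cast hS.card_pos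
  have hpet : ∀ C' ⊆ C, (C + A).card * C'.card ≤ (C' + A).card * C.card := by
    intro C' hC'
    obtain rfl | hne := C'.eq_empty_or_nonempty
    · simp
    have h0 : (0 : ℚ≥0) < C'.card := by exact_mod_cast hne.card_pos
    have hmin := hCmin C'
      (mem_erase_of_ne_of_mem hne.ne_empty (mem_powerset.2 (hC'.trans hCS)))
    rw [div_le_div_iff₀ hC0 h0] at hmin
    exact_mod_cast hmin
  refine ⟨C, hCS, hCne, ?_⟩
  have key : ∀ n : ℕ,
      ((C + n • A).card : ℚ≥0) ≤ (((C + A).card : ℚ≥0) / C.card) ^ n * C.card := by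
    intro n
    induction n with
    | zero => simp
    | succ n ih =>
        have h1 : (C + A + n • A).card * C.card ≤ (C + A).card * (C + n • A).card :=
          by
            have := pluennecke_petridis_inequality_add (n • A) hpet
            rwa [add_comm (n • A) C, add_right_comm C (n • A) A] at this
        have h2 : C + (n + 1) • A = C + A + n • A := by
          rw [succ_nsmul', ← add_assoc]
        calc ((C + (n + 1) • A).card : ℚ≥0)
            = ((C + A + n • A).card : ℚ≥0) := by rw [h2]
          _ ≤ ((C + A).card : ℚ≥0) * (C + n • A).card / C.card := by
              rw [le_div_iff₀ hC0]; exact_mod_cast h1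
          _ ≤ ((C + A).card : ℚ≥0) * ((((C + A).card : ℚ≥0) / C.card) ^ n * C.card)
                / C.card := by gcongr
          _ = (((C + A).card : ℚ≥0) / C.card) ^ (n + 1) * C.card := by
              field_simp
              rw [pow_succ, mul_comm ((((C + A).card : ℚ≥0) / C.card) ^ n), ← mul_assoc,
                mul_div_cancel₀ _ hC0.ne']
  intro n
  have hr : (((C + A).card : ℚ≥0) / C.card) ≤ ((S + A).card : ℚ≥0) / S.card :=
    hCmin S hS'
  have : ((C + n • A).card : ℚ≥0) * S.card ^ n ≤ ((S + A).card : ℚ≥0) ^ n * C.card := by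
    calc ((C + n • A).card : ℚ≥0) * S.card ^ n
        ≤ ((((C + A).card : ℚ≥0) / C.card) ^ n * C.card) * S.card ^ n := by
          gcongr
          exact key n
      _ ≤ ((((S + A).card : ℚ≥0) / S.card) ^ n * C.card) * S.card ^ n := by gcongr
      _ = ((S + A).card : ℚ≥0) ^ n * C.card := by
          rw [div_pow]
          field_simp
  exact_mod_cast this

lemma binom_bound (t : ℝ) (ht : 0 ≤ t) :
    ∀ k : ℕ, (1 + t) ^ k ≤ 1 + k * t + (k * (k - 1) / 2) * t ^ 2 * (1 + t) ^ k := by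
  intro k
  induction k with
  | zero => norm_num
  | succ k ih =>
      have hx1 : (1 : ℝ) ≤ (1 + t) ^ k := one_le_pow₀ (by linarith)
      have hx1' : (1 : ℝ) ≤ (1 + t) ^ (k + 1) := one_le_pow₀ (by linarith)
      have hk0 : (0 : ℝ) ≤ (k : ℝ) * ((k : ℝ) - 1) / 2 := by
        rcases Nat.eq_zero_or_pos k with h | h
        · simp [h]
        · have : (1 : ℝ) ≤ (k : ℝ) := by exact_mod_cast h
          nlinarith
      have A1 : (1 + t) ^ k * (1 + t) ≤
          (1 + k * t + ((k : ℝ) * ((k : ℝ) - 1) / 2) * t ^ 2 * (1 + t) ^ k) * (1 + t) :=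
        mul_le_mul_of_nonneg_right ih (by linarith)
      have A2 : (k : ℝ) * t ^ 2 ≤ (k : ℝ) * t ^ 2 * (1 + t) ^ (k + 1) := by
        have h := mul_le_mul_of_nonneg_left hx1'
          (show (0 : ℝ) ≤ (k : ℝ) * t ^ 2 by positivity)
        nlinarith [h]
      have hpow : (1 + t) ^ (k + 1) = (1 + t) ^ k * (1 + t) := by ring
      have key : (1 + t) ^ (k + 1) ≤ 1 + ((k : ℝ) + 1) * t +
          (((k : ℝ) + 1) * (k : ℝ) / 2) * t ^ 2 * (1 + t) ^ (k + 1) := by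
        calc (1 + t) ^ (k + 1) = (1 + t) ^ k * (1 + t) := hpow
          _ ≤ (1 + k * t + ((k : ℝ) * ((k : ℝ) - 1) / 2) * t ^ 2 * (1 + t) ^ k) * (1 + t) := A1
          _ = 1 + ((k : ℝ) + 1) * t + (k : ℝ) * t ^ 2
              + ((k : ℝ) * ((k : ℝ) - 1) / 2) * t ^ 2 * (1 + t) ^ (k + 1) := by
              rw [hpow]; ring
          _ ≤ 1 + ((k : ℝ) + 1) * t + (k : ℝ) * t ^ 2 * (1 + t) ^ (k + 1)
              + ((k : ℝ) * ((k : ℝ) - 1) / 2) * t ^ 2 * (1 + t) ^ (k + 1) := by linarith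
          _ = 1 + ((k : ℝ) + 1) * t
              + (((k : ℝ) + 1) * (k : ℝ) / 2) * t ^ 2 * (1 + t) ^ (k + 1) := by ring
      push_cast
      calc (1 + t) ^ (k + 1) ≤ 1 + ((k : ℝ) + 1) * t +
          (((k : ℝ) + 1) * (k : ℝ) / 2) * t ^ 2 * (1 + t) ^ (k + 1) := key
        _ = 1 + ((k : ℝ) + 1) * t +
            (((k : ℝ) + 1) * (((k : ℝ) + 1) - 1) / 2) * t ^ 2 * (1 + t) ^ (k + 1) := by ring

lemma zero_mem_nsmul {p : ℕ} (A : Finset (ZMod p)) (h0 : (0 : ZMod p) ∈ A) :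
    ∀ n : ℕ, (0 : ZMod p) ∈ n • A := by
  intro n
  induction n with
  | zero => simp
  | succ n ih =>
      rw [succ_nsmul]
      simpa using add_mem_add ih h0

lemma iterSum_eq_nsmul {p : ℕ} (A : Finset (ZMod p)) :
    ∀ n : ℕ, iterSum A n = n • A := by
  intro n
  induction n with
  | zero => simp only [iterSum, zero_nsmul]; exact singleton_zero
  | succ n ih => rw [iterSum, ih, succ_nsmul]

set_option maxHeartbeats 1000000 in
set_option maxRecDepth 10000 in
theorem iterated_sumset_bound (p : ℕ) (hp : p.Prime) (hp0 : 2 ^ 94 < p)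
    (ε : ℝ) (hε : ε ≤ 10 ^ (-(4 : ℤ)))
    (S : Finset (ZMod p)) (h0S : (0 : ZMod p) ∈ S) (hSsize : (p : ℝ) / 35 ≤ S.card)
    (m : ℕ) (hm6 : 6 ≤ m) (hmε : (m : ℝ) ≤ ε * S.card)
    (h2S : (S + S).card ≤ 2 * S.card + m) (hsep : (S + S).card + m + 3 ≤ p)
    (A : Finset (ZMod p)) (hA : IsKAtom p (m + 3) S A) (h0A : (0 : ZMod p) ∈ A)
    (hSA : (S + A).card ≤ S.card + A.card + m) (hAcard : A.card ≤ 3 * m + 5) :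
    ∀ k : ℕ, 1 ≤ k → k ≤ 32 →
      ((iterSum A k).card : ℝ) ≤ k * ((A.card : ℝ) + m) * (1 + 5 * k * ε / 2) + 1 := by
  intro k hk1 hk32
  have hSne : S.Nonempty := ⟨0, h0S⟩
  have hAne : A.Nonempty := ⟨0, h0A⟩
  have hppos : (0 : ℝ) < p := by exact_mod_cast hp.pos
  have hN : (0 : ℝ) < (S.card : ℝ) := lt_of_lt_of_le (by positivity) hSsize
  obtain ⟨t, htdef⟩ : ∃ t : ℝ, t = ((A.card : ℝ) + m) / (S.card : ℝ) := ⟨_, rfl⟩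
  have ht0 : 0 ≤ t := by rw [htdef]; positivity
  have hta : t * (S.card : ℝ) = (A.card : ℝ) + m := by
    rw [htdef]; field_simp
  -- epsilon bounds
  have hε6 : (6 : ℝ) ≤ ε * (S.card : ℝ) := le_trans (by exact_mod_cast hm6) hmε
  have hεpos : 0 < ε := by nlinarith [hε6, hN]
  have hε4 : ε ≤ 1 / 10000 := by
    have h10 : ((10 : ℝ) ^ (-(4 : ℤ))) = 1 / 10000 := by norm_num
    rw [h10] at hε; exact hε
  have hAc : (A.card : ℝ) ≤ 3 * (m : ℝ) + 5 := by exact_mod_cast hAcard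
  have ht29 : t ≤ 29 / 6 * ε := by
    rw [htdef, div_le_iff₀ hN]
    nlinarith [hmε, hε6, hAc]
  have ht5 : t ≤ 5 / 10000 := by nlinarith [ht29, hεpos, hε4]
  -- power bounds
  have hpow32 : (1 + t) ^ k ≤ (1 + 5 / 10000 : ℝ) ^ 32 := by
    calc (1 + t) ^ k ≤ (1 + t) ^ 32 := pow_le_pow_right₀ (by linarith) hk32
      _ ≤ (1 + 5 / 10000 : ℝ) ^ 32 := by
          apply pow_le_pow_left₀ (by linarith) (by linarith)
  have hnum : (1 + 5 / 10000 : ℝ) ^ 32 ≤ 30 / 29 := by norm_num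
  have hpow : (1 + t) ^ k ≤ 30 / 29 := le_trans hpow32 hnum
  have hone : (1 : ℝ) ≤ (1 + t) ^ k := one_le_pow₀ (by linarith)
  have hpownn : (0 : ℝ) ≤ (1 + t) ^ k := by linarith
  -- 2|S| ≤ p
  have hNp : 2 * S.card ≤ p := by
    have hcd := ZMod.cauchy_davenport hp hSne hSne
    rcases min_le_iff.1 hcd with h | h
    · omega
    · omega
  -- Pluennecke--Petridis
  obtain ⟨C, hCS, hCne, hCkey⟩ := petridis_aux S A hSne
  have hCcard : ((C.card : ℝ)) ≤ (S.card : ℝ) := by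
    exact_mod_cast card_le_card hCS
  have hC1 : (1 : ℝ) ≤ (C.card : ℝ) := by exact_mod_cast hCne.card_pos
  -- |S+A| ≤ |S|(1+t)
  have hSAr : ((S + A).card : ℝ) ≤ (S.card : ℝ) * (1 + t) := by
    have h : (S + A).card ≤ S.card + (A.card + m) := by omega
    have h' : ((S + A).card : ℝ) ≤ (S.card : ℝ) + ((A.card : ℝ) + m) := by
      exact_mod_cast h
    nlinarith [hta]
  -- |C + kA| ≤ (1+t)^k |C|
  have hCk : ((C + k • A).card : ℝ) ≤ (1 + t) ^ k * (C.card : ℝ) := by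
    have h1 : ((C + k • A).card : ℝ) * (S.card : ℝ) ^ k
        ≤ ((S + A).card : ℝ) ^ k * (C.card : ℝ) := by exact_mod_cast hCkey k
    have h2 : ((S + A).card : ℝ) ^ k ≤ ((S.card : ℝ) * (1 + t)) ^ k :=
      pow_le_pow_left₀ (by positivity) hSAr k
    have hNk : (0 : ℝ) < (S.card : ℝ) ^ k := by positivity
    rw [← mul_le_mul_iff_of_pos_right hNk]
    calc ((C + k • A).card : ℝ) * (S.card : ℝ) ^ k
        ≤ ((S + A).card : ℝ) ^ k * (C.card : ℝ) := h1
      _ ≤ ((S.card : ℝ) * (1 + t)) ^ k * (C.card : ℝ) :=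
          mul_le_mul_of_nonneg_right h2 (by positivity)
      _ = (1 + t) ^ k * (C.card : ℝ) * (S.card : ℝ) ^ k := by rw [mul_pow]; ring
  -- Cauchy--Davenport
  have hkAne : (k • A).Nonempty := ⟨0, zero_mem_nsmul A h0A k⟩
  have hcd := ZMod.cauchy_davenport hp hCne hkAne
  rw [iterSum_eq_nsmul]
  rcases min_le_iff.1 hcd with h | h
  · exfalso
    have hple : (p : ℝ) ≤ ((C + k • A).card : ℝ) := by exact_mod_cast h
    have h2N : 2 * (S.card : ℝ) ≤ (p : ℝ) := by exact_mod_cast hNp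
    have hb1 : (1 + t) ^ k * (C.card : ℝ) ≤ (1 + t) ^ k * (S.card : ℝ) :=
      mul_le_mul_of_nonneg_left hCcard hpownn
    have hb2 : (1 + t) ^ k * (S.card : ℝ) ≤ 30 / 29 * (S.card : ℝ) :=
      mul_le_mul_of_nonneg_right hpow (by positivity)
    linarith [hCk]
  · have hnat : C.card + (k • A).card ≤ (C + k • A).card + 1 := by omega
    have hnat' : ((C.card : ℝ)) + ((k • A).card : ℝ) ≤ ((C + k • A).card : ℝ) + 1 := by
      exact_mod_cast hnat
    have hr : ((k • A).card : ℝ) ≤ (1 + t) ^ k * (C.card : ℝ) + 1 - (C.card : ℝ) := by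
      linarith [hCk]
    have hmul : ((1 + t) ^ k - 1) * (C.card : ℝ) ≤ ((1 + t) ^ k - 1) * (S.card : ℝ) :=
      mul_le_mul_of_nonneg_left hCcard (by linarith)
    have hr2 : ((k • A).card : ℝ) ≤ ((1 + t) ^ k - 1) * (S.card : ℝ) + 1 := by
      nlinarith [hr, hmul]
    -- binomial estimate
    have hbin := binom_bound t ht0 k
    have hB : ((1 + t) ^ k - 1) * (S.card : ℝ) ≤
        (k : ℝ) * t * (S.card : ℝ)
          + ((k : ℝ) * ((k : ℝ) - 1) / 2) * t ^ 2 * (1 + t) ^ k * (S.card : ℝ) := by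
      have h' : (1 + t) ^ k - 1 ≤
          (k : ℝ) * t + ((k : ℝ) * ((k : ℝ) - 1) / 2) * t ^ 2 * (1 + t) ^ k := by
        linarith [hbin]
      nlinarith [mul_le_mul_of_nonneg_right h' hN.le]
    have h5ε : t * (1 + t) ^ k ≤ 5 * ε := by
      have hmm := mul_le_mul ht29 hpow (by positivity) (by positivity)
      nlinarith [hmm]
    have hk1' : (1 : ℝ) ≤ (k : ℝ) := by exact_mod_cast hk1
    have hmain : ((k : ℝ) * ((k : ℝ) - 1) / 2) * t ^ 2 * (1 + t) ^ k * (S.card : ℝ)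
        ≤ (k : ℝ) * ((A.card : ℝ) + m) * (5 * k * ε / 2) := by
      have e1 : ((k : ℝ) * ((k : ℝ) - 1) / 2) * t ^ 2 * (1 + t) ^ k * (S.card : ℝ)
          = ((k : ℝ) * ((k : ℝ) - 1) / 2) * (t * (1 + t) ^ k) * ((A.card : ℝ) + m) := by
        rw [← hta]; ring
      rw [e1]
      have hq2 : ((k : ℝ) * ((k : ℝ) - 1) / 2) ≤ (k : ℝ) * (k : ℝ) / 2 := by nlinarith
      have hq0 : (0 : ℝ) ≤ (k : ℝ) * ((k : ℝ) - 1) / 2 := by nlinarith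
      have htp : (0 : ℝ) ≤ t * (1 + t) ^ k := by positivity
      have h2 : ((k : ℝ) * ((k : ℝ) - 1) / 2) * (t * (1 + t) ^ k)
          ≤ ((k : ℝ) * (k : ℝ) / 2) * (5 * ε) :=
        mul_le_mul hq2 h5ε htp (by positivity)
      calc ((k : ℝ) * ((k : ℝ) - 1) / 2) * (t * (1 + t) ^ k) * ((A.card : ℝ) + m)
          ≤ ((k : ℝ) * (k : ℝ) / 2) * (5 * ε) * ((A.card : ℝ) + m) :=
            mul_le_mul_of_nonneg_right h2 (by positivity)
        _ = (k : ℝ) * ((A.card : ℝ) + m) * (5 * k * ε / 2) := by ring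
    have htaN : (k : ℝ) * t * (S.card : ℝ) = (k : ℝ) * ((A.card : ℝ) + m) := by
      rw [mul_assoc, hta]
    calc ((k • A).card : ℝ) ≤ ((1 + t) ^ k - 1) * (S.card : ℝ) + 1 := hr2
      _ ≤ (k : ℝ) * ((A.card : ℝ) + m) * (1 + 5 * k * ε / 2) + 1 := by
          linarith [hB, hmain, htaN.le, htaN.ge]
end

section
/- Let p be prime and C ⊆ ℤ/pℤ with 0 ∈ C, C ⊆ [0, c) where c = ℓ(C) < p/2 (identifying residues with integers in [0,p)). Let t be a positive integer with t < p/(2c), and define intervals I_i = [(i-1)c, ic) for i = 1, ..., 2t, with I = I₁ ∪ ... ∪ I_{2t}. Let B ⊆ ℤ/pℤ be such that I_i ∩ B ≠ ∅ for every i = 1, ..., 2t. Then |B+C| ≥ |B ∪ ((B+C) ∩ I)| ≥ |B| + (t - 1/2)·c·(ρ(C) - |B ∩ I|/((2t-1)c)), where ρ(C) = (|C|-1)/ℓ(C). -/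
open Finset Pointwise

theorem density_lemma (p : ℕ) (hp : p.Prime)
    (C : Finset (ZMod p)) (h0C : (0 : ZMod p) ∈ C)
    (c : ℕ) (hc : c = APlen C) (hCc : ∀ x ∈ C, x.val < c) (hcp : 2 * c < p)
    (t : ℕ) (ht : 0 < t) (htc : 2 * t * c < p)
    (I : Finset (ZMod p))
    (hI : I = (Finset.range (2 * t * c)).image (fun i : ℕ => (i : ZMod p)))
    (B : Finset (ZMod p))
    (hB : ∀ i : ℕ, 1 ≤ i → i ≤ 2 * t → ∃ b ∈ B, (i - 1) * c ≤ b.val ∧ b.val < i * c) :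
    (B ∪ ((B + C) ∩ I)).card ≤ (B + C).card ∧
    (B.card : ℝ) + ((t : ℝ) - 1 / 2) * c *
        (((C.card : ℝ) - 1) / c - ((B ∩ I).card : ℝ) / ((2 * t - 1) * c))
      ≤ ((B ∪ ((B + C) ∩ I)).card : ℝ) := by
  classical
  haveI : NeZero p := ⟨hp.pos.ne'⟩
  have hc0 : 0 < c := by simpa using hCc 0 h0C
  have ht1 : 1 ≤ 2 * t := by omega
  -- membership in I
  have hmemI : ∀ x : ZMod p, x ∈ I ↔ x.val < 2 * t * c := by
    intro x
    subst hI
    simp only [Finset.mem_image, Finset.mem_range]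
    constructor
    · rintro ⟨k, hk, rfl⟩
      rwa [ZMod.val_cast_of_lt (hk.trans htc)]
    · intro h
      exact ⟨x.val, h, ZMod.natCast_rightInverse x⟩
  -- choose maximal representatives in each interval
  set Bi : ℕ → Finset (ZMod p) :=
    fun i => B.filter (fun x => (i - 1) * c ≤ x.val ∧ x.val < i * c) with hBi
  have hbex : ∀ i : ℕ, ∃ b : ZMod p,
      1 ≤ i → i ≤ 2 * t → (b ∈ Bi i ∧ ∀ x ∈ Bi i, x.val ≤ b.val) := by
    intro i
    by_cases h : 1 ≤ i ∧ i ≤ 2 * t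
    · obtain ⟨b0, hb0, hb1, hb2⟩ := hB i h.1 h.2
      have hne : (Bi i).Nonempty := ⟨b0, by simp [hBi, Finset.mem_filter, hb0, hb1, hb2]⟩
      obtain ⟨bm, hbm, hbmax⟩ := Finset.exists_max_image (Bi i) (fun x => x.val) hne
      exact ⟨bm, fun _ _ => ⟨hbm, hbmax⟩⟩
    · exact ⟨0, fun h1 h2 => absurd ⟨h1, h2⟩ h⟩
  choose b hb using hbex
  have hbB : ∀ i : ℕ, 1 ≤ i → i ≤ 2 * t → b i ∈ B := by
    intro i h1 h2
    have := ((hb i h1 h2).1)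
    simp only [hBi, Finset.mem_filter] at this
    exact this.1
  have hblo : ∀ i : ℕ, 1 ≤ i → i ≤ 2 * t → (i - 1) * c ≤ (b i).val := by
    intro i h1 h2
    have := ((hb i h1 h2).1)
    simp only [hBi, Finset.mem_filter] at this
    exact this.2.1
  have hbhi : ∀ i : ℕ, 1 ≤ i → i ≤ 2 * t → (b i).val < i * c := by
    intro i h1 h2
    have := ((hb i h1 h2).1)
    simp only [hBi, Finset.mem_filter] at this
    exact this.2.2
  -- the translated sets
  set A : ℕ → Finset (ZMod p) :=
    fun i => (C.image (fun y => b i + y)).erase (b i) with hA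
  set s : Finset ℕ := Finset.Icc 1 (2 * t - 1) with hs
  -- value addition without wraparound
  have hvadd : ∀ i : ℕ, 1 ≤ i → i + 1 ≤ 2 * t → ∀ y ∈ C,
      (b i + y).val = (b i).val + y.val := by
    intro i h1 h2 y hy
    have hb2 : (b i).val < i * c := hbhi i h1 (by omega)
    have hy2 : y.val < c := hCc y hy
    have hiic : (i + 1) * c = i * c + c := by ring
    have h4 : (i + 1) * c ≤ 2 * t * c := Nat.mul_le_mul_right c h2
    exact ZMod.val_add_of_lt (by omega)
  -- membership characterization of A i
  have hAmem : ∀ i : ℕ, ∀ x : ZMod p, x ∈ A i ↔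
      (x ≠ b i ∧ ∃ y ∈ C, b i + y = x) := by
    intro i x
    simp only [hA, Finset.mem_erase, Finset.mem_image]
  -- A i bounds
  have hAval : ∀ i : ℕ, 1 ≤ i → i + 1 ≤ 2 * t → ∀ x ∈ A i,
      (i - 1) * c ≤ x.val ∧ x.val < (i + 1) * c ∧ (b i).val < x.val := by
    intro i h1 h2 x hx
    rw [hAmem] at hx
    obtain ⟨hne, y, hy, rfl⟩ := hx
    have hv := hvadd i h1 h2 y hy
    have hy0 : y ≠ 0 := by rintro rfl; simp at hne
    have hy1 : 1 ≤ y.val := ZMod.val_pos.2 hy0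
    have hlo2 := hblo i h1 (by omega)
    have hhi2 := hbhi i h1 (by omega)
    have hyc := hCc y hy
    have hiic : (i + 1) * c = i * c + c := by ring
    refine ⟨by omega, by omega, by omega⟩
  have hAI : ∀ i ∈ s, A i ⊆ I := by
    intro i hi x hx
    simp only [hs, Finset.mem_Icc] at hi
    have h2 : i + 1 ≤ 2 * t := by omega
    have hx1 := (hAval i hi.1 h2 x hx).2.1
    rw [hmemI]
    have hx2 : (i + 1) * c ≤ 2 * t * c := Nat.mul_le_mul_right c h2
    omega
  have hABC : ∀ i ∈ s, A i ⊆ B + C := by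
    intro i hi x hx
    simp only [hs, Finset.mem_Icc] at hi
    rw [hAmem] at hx
    obtain ⟨-, y, hy, rfl⟩ := hx
    exact Finset.add_mem_add (hbB i hi.1 (by omega)) hy
  -- cardinality of A i
  have hAcard : ∀ i ∈ s, (A i).card = C.card - 1 := by
    intro i hi
    have hinj : Function.Injective (fun y : ZMod p => b i + y) :=
      fun a a' h => by simpa using h
    have hbmem : b i ∈ C.image (fun y => b i + y) :=
      Finset.mem_image.2 ⟨0, h0C, by simp⟩
    rw [hA]
    rw [Finset.card_erase_of_mem hbmem, Finset.card_image_of_injective _ hinj]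
  set D : Finset (ZMod p) := ((B + C) ∩ I) \ B with hD
  -- each x lies in at most two A i, and at most one if x ∈ B
  have hfilt : ∀ x : ZMod p, ∀ i ∈ s.filter (fun i => x ∈ A i),
      i = x.val / c ∨ i = x.val / c + 1 := by
    intro x i hi
    simp only [Finset.mem_filter, hs, Finset.mem_Icc] at hi
    obtain ⟨⟨h1, h2⟩, hx⟩ := hi
    have h2t : i + 1 ≤ 2 * t := by omega
    obtain ⟨hlo, hhi, -⟩ := hAval i h1 h2t x hx
    have hq1 : i - 1 ≤ x.val / c := (Nat.le_div_iff_mul_le hc0).2 hlo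
    have hq2 : x.val / c < i + 1 := (Nat.div_lt_iff_lt_mul hc0).2 hhi
    omega
  have hcount2 : ∀ x : ZMod p, (s.filter (fun i => x ∈ A i)).card ≤ 2 := by
    intro x
    have hsub : s.filter (fun i => x ∈ A i) ⊆ {x.val / c, x.val / c + 1} := by
      intro i hi
      rcases hfilt x i hi with h | h <;> simp [h]
    calc (s.filter (fun i => x ∈ A i)).card ≤ ({x.val / c, x.val / c + 1} : Finset ℕ).card :=
          Finset.card_le_card hsub
      _ ≤ 2 := Finset.card_insert_le _ _ |>.trans (by simp)
  have hcount1 : ∀ x ∈ B, (s.filter (fun i => x ∈ A i)).card ≤ 1 := by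
    intro x hxB
    have hsub : s.filter (fun i => x ∈ A i) ⊆ {x.val / c} := by
      intro i hi
      have hcase := hfilt x i hi
      simp only [Finset.mem_filter, hs, Finset.mem_Icc] at hi
      obtain ⟨⟨h1, h2⟩, hx⟩ := hi
      have h2t : i + 1 ≤ 2 * t := by omega
      obtain ⟨hlo, hhi, hbx⟩ := hAval i h1 h2t x hx
      rcases hcase with h | h
      · simp [h]
      · exfalso
        -- i = x.val/c + 1 : then x ∈ Bi i with val bigger than b i, contradiction
        have hxlo : (i - 1) * c ≤ x.val := by
          have heq : i - 1 = x.val / c := by omega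
          rw [heq]
          exact Nat.div_mul_le_self _ _
        have hxhi : x.val < i * c := by
          have hlt : x.val / c < i := by omega
          exact (Nat.div_lt_iff_lt_mul hc0).1 hlt
        have hxBi : x ∈ Bi i := by
          simp [hBi, Finset.mem_filter, hxB, hxlo, hxhi]
        have := (hb i h1 (by omega)).2 x hxBi
        omega
    calc (s.filter (fun i => x ∈ A i)).card ≤ ({x.val / c} : Finset ℕ).card :=
          Finset.card_le_card hsub
      _ = 1 := Finset.card_singleton _
  -- split A i into its B-part and D-part
  have hsplit : ∀ i ∈ s, (A i).card =
      ((B ∩ I).filter (fun x => x ∈ A i)).card + (D.filter (fun x => x ∈ A i)).card := by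
    intro i hi
    have h1 : (B ∩ I).filter (fun x => x ∈ A i) = A i ∩ B := by
      ext x
      simp only [Finset.mem_filter, Finset.mem_inter]
      constructor
      · rintro ⟨⟨hB2, -⟩, hA2⟩; exact ⟨hA2, hB2⟩
      · rintro ⟨hA2, hB2⟩; exact ⟨⟨hB2, hAI i hi hA2⟩, hA2⟩
    have h2 : D.filter (fun x => x ∈ A i) = A i \ B := by
      ext x
      simp only [hD, Finset.mem_filter, Finset.mem_sdiff, Finset.mem_inter]
      constructor
      · rintro ⟨⟨-, hB2⟩, hA2⟩; exact ⟨hA2, hB2⟩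
      · rintro ⟨hA2, hB2⟩; exact ⟨⟨⟨hABC i hi hA2, hAI i hi hA2⟩, hB2⟩, hA2⟩
    rw [h1, h2, Finset.card_inter_add_card_sdiff]
  -- double counting
  have hswap : ∀ (u : Finset (ZMod p)),
      (∑ i ∈ s, (u.filter (fun x => x ∈ A i)).card)
        = ∑ x ∈ u, (s.filter (fun i => x ∈ A i)).card := by
    intro u
    simp only [Finset.card_filter]
    exact Finset.sum_comm
  have hmain : (2 * t - 1) * (C.card - 1) ≤ (B ∩ I).card + 2 * D.card := by
    have hscard : s.card = 2 * t - 1 := by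
      rw [hs, Nat.card_Icc]; omega
    calc (2 * t - 1) * (C.card - 1) = ∑ i ∈ s, (C.card - 1) := by
          rw [Finset.sum_const, hscard, smul_eq_mul]
      _ = ∑ i ∈ s, (A i).card := Finset.sum_congr rfl (fun i hi => (hAcard i hi).symm)
      _ = ∑ i ∈ s, (((B ∩ I).filter (fun x => x ∈ A i)).card
            + (D.filter (fun x => x ∈ A i)).card) :=
          Finset.sum_congr rfl hsplit
      _ = (∑ i ∈ s, ((B ∩ I).filter (fun x => x ∈ A i)).card)
            + ∑ i ∈ s, (D.filter (fun x => x ∈ A i)).card := Finset.sum_add_distrib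
      _ = (∑ x ∈ B ∩ I, (s.filter (fun i => x ∈ A i)).card)
            + ∑ x ∈ D, (s.filter (fun i => x ∈ A i)).card := by
          rw [hswap, hswap]
      _ ≤ (∑ x ∈ B ∩ I, 1) + ∑ x ∈ D, 2 := by
          gcongr with x hx x hx
          · exact hcount1 x (Finset.mem_inter.1 hx).1
          · exact hcount2 x
      _ = (B ∩ I).card + 2 * D.card := by
          simp [Finset.sum_const, mul_comm]
  -- B ⊆ B + C
  have hBsub : B ⊆ B + C := by
    intro x hx
    have := Finset.add_mem_add hx h0C
    simpa using this
  have hcardU : (B ∪ ((B + C) ∩ I)).card = B.card + D.card := by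
    rw [← Finset.union_sdiff_self_eq_union, Finset.card_union_of_disjoint Finset.disjoint_sdiff]
  constructor
  · exact Finset.card_le_card
      (Finset.union_subset hBsub Finset.inter_subset_left)
  · have hC1 : 1 ≤ C.card := Finset.card_pos.2 ⟨0, h0C⟩
    have hmainR : ((2 * t : ℝ) - 1) * ((C.card : ℝ) - 1)
        ≤ ((B ∩ I).card : ℝ) + 2 * (D.card : ℝ) := by
      have hm := hmain
      have h2t1 : 1 ≤ 2 * t := ht1
      have : ((2 * t - 1 : ℕ) : ℝ) * ((C.card - 1 : ℕ) : ℝ)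
          ≤ ((B ∩ I).card : ℝ) + 2 * (D.card : ℝ) := by exact_mod_cast hm
      rwa [Nat.cast_sub h2t1, Nat.cast_sub hC1, Nat.cast_one, Nat.cast_mul,
        Nat.cast_ofNat] at this
    rw [hcardU]
    have hcR : (0 : ℝ) < c := by exact_mod_cast hc0
    have h2tR : (0 : ℝ) < 2 * (t : ℝ) - 1 := by
      have : (1 : ℝ) ≤ t := by exact_mod_cast ht
      linarith
    have expand : ((t : ℝ) - 1 / 2) * c *
        (((C.card : ℝ) - 1) / c - ((B ∩ I).card : ℝ) / ((2 * t - 1) * c))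
        = ((2 * (t : ℝ) - 1) * ((C.card : ℝ) - 1) - ((B ∩ I).card : ℝ)) / 2 := by
      field_simp
      linear_combination (-((B ∩ I).card : ℝ)) * mul_inv_cancel₀ h2tR.ne'
    rw [expand]
    push_cast
    linarith
end
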